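/- Every finite simple C_4-free graph G on n vertices contains an independent set of size at least n/(3 + √n). -/

import Mathlib

open SimpleGraph

/-- The average degree of a graph: `2 e(G) / |V(G)|`. -/
noncomputable def avgDeg {V : Type*} (G : SimpleGraph V) : ℝ :=
  2 * (G.edgeSet.ncard : ℝ) / (Nat.card V : ℝ)

/-- The maximum degree of a graph on a finite vertex type. -/
noncomputable def maxDeg {V : Type*} [Fintype V] (G : SimpleGraph V) : ℕ :=
  Finset.univ.sup fun v => (G.neighborSet v).ncard

/-- `G` contains no (not necessarily induced) copy of the complete bipartite graph `K_{s,s}`. -/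
def KssFree {V : Type*} (G : SimpleGraph V) (s : ℕ) : Prop :=
  ¬ ∃ S T : Finset V, Disjoint S T ∧ S.card = s ∧ T.card = s ∧
      ∀ a ∈ S, ∀ b ∈ T, G.Adj a b

/-- `G` contains no (not necessarily induced) copy of the four-cycle `C₄`:
no two distinct vertices have two distinct common neighbours. -/
def C4Free {V : Type*} (G : SimpleGraph V) : Prop :=
  ¬ ∃ a b c d : V, a ≠ b ∧ c ≠ d ∧ G.Adj a c ∧ G.Adj b c ∧ G.Adj a d ∧ G.Adj b d

/-- `G` contains no triangle. -/
def C3Free {V : Type*} (G : SimpleGraph V) : Prop :=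
  ¬ ∃ a b c : V, G.Adj a b ∧ G.Adj b c ∧ G.Adj a c

/-- `G` is bipartite: the vertex set can be split into two independent sets. -/
def IsBipartite {V : Type*} (G : SimpleGraph V) : Prop :=
  ∃ f : V → Bool, ∀ ⦃a b : V⦄, G.Adj a b → f a ≠ f b

/-- `G` is `d`-degenerate: every nonempty (induced) subgraph has a vertex of degree at most `d`. -/
def IsDegenerate {V : Type*} (G : SimpleGraph V) (d : ℝ) : Prop :=
  ∀ S : Finset V, S.Nonempty → ∃ v ∈ S, ((G.neighborSet v ∩ ↑S).ncard : ℝ) ≤ d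

/-- The number of edges of `G` with one endpoint in `A` and one in `B`. -/
noncomputable def eBetween {V : Type*} (G : SimpleGraph V) (A B : Set V) : ℕ :=
  {e : Sym2 V | e ∈ G.edgeSet ∧ ∃ a ∈ A, ∃ b ∈ B, e = s(a, b)}.ncard
lemma count_lemma {V : Type} [Fintype V] [DecidableEq V] (G : SimpleGraph V)
    [DecidableRel G.Adj] (hC4 : C4Free G) (S : Finset V) :
    ∑ v ∈ S, ((G.neighborFinset v ∩ S).offDiag.card) ≤ S.offDiag.card := by
  rw [← Finset.card_sigma]
  apply Finset.card_le_card_of_injOn (fun x => x.2)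
  · rintro ⟨v, a, b⟩ hx
    simp only [Finset.mem_coe, Finset.mem_sigma, Finset.mem_offDiag, Finset.mem_inter,
      SimpleGraph.mem_neighborFinset] at hx ⊢
    exact ⟨hx.2.1.2, hx.2.2.1.2, hx.2.2.2⟩
  · rintro ⟨v, a, b⟩ hx ⟨w, a', b'⟩ hy h
    simp only [Finset.coe_sigma, Set.mem_sigma_iff, Finset.mem_coe, Finset.mem_offDiag,
      Finset.mem_inter, SimpleGraph.mem_neighborFinset] at hx hy
    simp only [Prod.mk.injEq] at h
    obtain ⟨rfl, rfl⟩ : a = a' ∧ b = b' := by exact ⟨h.1, h.2⟩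
    by_cases hvw : v = w
    · subst hvw; rfl
    · exact absurd ⟨v, w, a, b, hvw, hx.2.2.2, hx.2.1.1, hy.2.1.1, hx.2.2.1.1, hy.2.2.1.1⟩ hC4

lemma min_deg_lemma {V : Type} [Fintype V] [DecidableEq V] (G : SimpleGraph V)
    [DecidableRel G.Adj] (hC4 : C4Free G) (S : Finset V) (hS : S.Nonempty) :
    ∃ v ∈ S, (G.neighborFinset v ∩ S).card * (G.neighborFinset v ∩ S).card
      - (G.neighborFinset v ∩ S).card ≤ S.card - 1 := by
  by_contra h
  push_neg at h
  have hm : 1 ≤ S.card := Finset.card_pos.mpr hS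
  have hlb : ∀ v ∈ S, S.card ≤ (G.neighborFinset v ∩ S).card * (G.neighborFinset v ∩ S).card
      - (G.neighborFinset v ∩ S).card := fun v hv => by have := h v hv; omega
  have h1 : S.card * S.card ≤ ∑ v ∈ S, ((G.neighborFinset v ∩ S).offDiag.card) := by
    calc S.card * S.card = ∑ _v ∈ S, S.card := by rw [Finset.sum_const, smul_eq_mul]
    _ ≤ _ := Finset.sum_le_sum (fun v hv => by rw [Finset.offDiag_card]; exact hlb v hv)
  have h2 := count_lemma G hC4 S
  rw [Finset.offDiag_card] at h2
  have h4 : S.card * S.card - S.card < S.card * S.card :=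
    Nat.sub_lt (Nat.mul_pos hm hm) hm
  exact absurd (h1.trans h2) (not_le.mpr h4)

lemma deg_bound {V : Type} [Fintype V] [DecidableEq V] (G : SimpleGraph V)
    [DecidableRel G.Adj] (hC4 : C4Free G) (S : Finset V) (hS : S.Nonempty) :
    ∃ v ∈ S, ((G.neighborFinset v ∩ S).card : ℝ) + 1
      ≤ (3 + 2 * Real.sqrt (Fintype.card V)) / 2 := by
  obtain ⟨v, hv, hdd⟩ := min_deg_lemma G hC4 S hS
  refine ⟨v, hv, ?_⟩
  set d := (G.neighborFinset v ∩ S).card with hd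
  have hs0 : (0:ℝ) ≤ Real.sqrt (Fintype.card V) := Real.sqrt_nonneg _
  rcases Nat.eq_zero_or_pos d with h0 | h1
  · rw [h0]; push_cast; linarith
  · have hmn : S.card ≤ Fintype.card V := Finset.card_le_univ S
    have hm : 1 ≤ S.card := Finset.card_pos.mpr hS
    have hn1 : 1 ≤ Fintype.card V := hm.trans hmn
    have hdd' : d * d - d ≤ Fintype.card V - 1 := hdd.trans (by omega)
    have hddR : (d:ℝ) * d - d ≤ (Fintype.card V : ℝ) - 1 := by
      have hle : d ≤ d * d := Nat.le_mul_of_pos_left d h1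
      have := (Nat.cast_le (α := ℝ)).mpr hdd'
      rw [Nat.cast_sub hle, Nat.cast_sub hn1] at this
      push_cast at this ⊢
      linarith
    have hs1 : (1:ℝ) ≤ Real.sqrt (Fintype.card V) := by
      rw [show (1:ℝ) = Real.sqrt 1 by simp]
      exact Real.sqrt_le_sqrt (by exact_mod_cast hn1)
    have hss : Real.sqrt (Fintype.card V) * Real.sqrt (Fintype.card V)
        = (Fintype.card V : ℝ) := Real.mul_self_sqrt (by positivity)
    by_contra hcon
    push_neg at hcon
    have hd1 : (1:ℝ) ≤ (d:ℝ) := by exact_mod_cast h1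
    nlinarith [hcon, hddR, hss, hs1, hd1]

lemma greedy {V : Type} [Fintype V] [DecidableEq V] (G : SimpleGraph V)
    [DecidableRel G.Adj] (hC4 : C4Free G) :
    ∀ (k : ℕ) (S : Finset V), S.card ≤ k →
      ∃ I : Finset V, I ⊆ S ∧ (∀ a ∈ I, ∀ b ∈ I, ¬ G.Adj a b) ∧
        (S.card : ℝ) ≤ (I.card : ℝ) * ((3 + 2 * Real.sqrt (Fintype.card V)) / 2) := by
  intro k
  induction k with
  | zero =>
    intro S hScard
    refine ⟨∅, Finset.empty_subset _, by simp, ?_⟩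
    simp [Nat.le_zero.mp hScard]
  | succ k ih =>
    intro S hScard
    rcases S.eq_empty_or_nonempty with rfl | hS
    · exact ⟨∅, Finset.empty_subset _, by simp, by simp⟩
    obtain ⟨v, hv, hdeg⟩ := deg_bound G hC4 S hS
    set R : Finset V := insert v (G.neighborFinset v ∩ S) with hR
    set S' : Finset V := S \ R with hS'
    have hvR : v ∈ R := Finset.mem_insert_self _ _
    have hS'sub : S' ⊆ S.erase v := by
      intro x hx
      rw [hS', Finset.mem_sdiff] at hx
      exact Finset.mem_erase.mpr ⟨fun h => hx.2 (h ▸ hvR), hx.1⟩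
    have hS'card : S'.card ≤ k := by
      have := Finset.card_le_card hS'sub
      have := Finset.card_erase_of_mem hv
      omega
    obtain ⟨I', hI'sub, hI'ind, hI'card⟩ := ih S' hS'card
    have hvI' : v ∉ I' := fun h => (Finset.mem_sdiff.mp (hI'sub h)).2 hvR
    refine ⟨insert v I', ?_, ?_, ?_⟩
    · intro x hx
      rcases Finset.mem_insert.mp hx with rfl | hx
      · exact hv
      · exact (Finset.mem_sdiff.mp (hI'sub hx)).1
    · intro a ha b hb hab
      have hnoadj : ∀ x ∈ I', ¬ G.Adj v x := by
        intro x hx hadj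
        have hxS' := Finset.mem_sdiff.mp (hI'sub hx)
        exact hxS'.2 (Finset.mem_insert_of_mem (Finset.mem_inter.mpr
          ⟨SimpleGraph.mem_neighborFinset _ _ _ |>.mpr hadj, hxS'.1⟩))
      rcases Finset.mem_insert.mp ha with ha' | ha'
      · subst ha'
        rcases Finset.mem_insert.mp hb with hb' | hb'
        · subst hb'; exact G.loopless.irrefl _ hab
        · exact hnoadj b hb' hab
      · rcases Finset.mem_insert.mp hb with hb' | hb'
        · subst hb'
          exact hnoadj a ha' hab.symm
        · exact hI'ind a ha' b hb' hab
    · have hRS : R ⊆ S := by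
        intro x hx
        rcases Finset.mem_insert.mp hx with rfl | hx
        · exact hv
        · exact (Finset.mem_inter.mp hx).2
      have hcard : S.card ≤ S'.card + ((G.neighborFinset v ∩ S).card + 1) := by
        have h1 : S'.card = S.card - R.card := Finset.card_sdiff_of_subset hRS
        have h2 : R.card ≤ (G.neighborFinset v ∩ S).card + 1 := Finset.card_insert_le _ _
        have h3 : R.card ≤ S.card := Finset.card_le_card hRS
        omega
      have hcardR : (S.card : ℝ) ≤ (S'.card : ℝ) + (((G.neighborFinset v ∩ S).card : ℝ) + 1) := by
        exact_mod_cast hcard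
      rw [Finset.card_insert_of_notMem hvI']
      push_cast
      calc (S.card : ℝ) ≤ (S'.card : ℝ) + (((G.neighborFinset v ∩ S).card : ℝ) + 1) := hcardR
      _ ≤ (I'.card : ℝ) * ((3 + 2 * Real.sqrt (Fintype.card V)) / 2)
          + (3 + 2 * Real.sqrt (Fintype.card V)) / 2 := by linarith
      _ = _ := by ring

/-- Proposition 6.7: any `n`-vertex `C₄`-free graph has an independent set of size at least
`n / (3 + √n)`. -/
theorem C4_free_independent_set (V : Type) [Fintype V] (G : SimpleGraph V)
    (hC4 : C4Free G) :
    ∃ I : Finset V, (∀ a ∈ I, ∀ b ∈ I, ¬ G.Adj a b) ∧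
      (Fintype.card V : ℝ) / (3 + Real.sqrt (Fintype.card V)) ≤ (I.card : ℝ) := by
  classical
  obtain ⟨I, -, hind, hcard⟩ := greedy G hC4 (Fintype.card V) Finset.univ
    (le_of_eq Finset.card_univ)
  rw [Finset.card_univ] at hcard
  refine ⟨I, hind, ?_⟩
  set s := Real.sqrt (Fintype.card V) with hs
  have hs0 : (0:ℝ) ≤ s := Real.sqrt_nonneg _
  have hpos : (0:ℝ) < 3 + s := by linarith
  rw [div_le_iff₀ hpos]
  calc (Fintype.card V : ℝ) ≤ (I.card : ℝ) * ((3 + 2 * s) / 2) := hcard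
  _ ≤ (I.card : ℝ) * (3 + s) := by
      apply mul_le_mul_of_nonneg_left (by linarith) (by positivity)
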